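/- The constrained minimal specific energy of the two-dimensional Euclid's hat equals −1/2; that is, the infimum over all integers n ≥ 2, all points x₁, …, xₙ ∈ ℝ² and all charges σ₁, …, σₙ ∈ {−1, 1} with non-zero net charge ∑_{j=1}^{n} σⱼ ≠ 0, of (1/(n−1))·∑_{1 ≤ i < j ≤ n} σᵢ σⱼ h(|xᵢ − xⱼ|), is equal to −1/2. -/

import Mathlib

open Real

/-- The two-dimensional Euclid's hat function:
`h w = (2/π)(arccos w − w√(1−w²))` for `0 ≤ w ≤ 1` and `h w = 0` for `w > 1`. -/
noncomputable def euclidHat (w : ℝ) : ℝ :=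
  if w ≤ 1 then (2 / π) * (Real.arccos w - w * Real.sqrt (1 - w ^ 2)) else 0

open MeasureTheory Metric intervalIntegral

local notation "E2" => EuclideanSpace ℝ (Fin 2)

lemma my_integral_sqrt (w : ℝ) (h0 : 0 ≤ w) (h1 : w ≤ 1) :
    ∫ s in w..1, Real.sqrt (1 - s^2) = (Real.arccos w - w * Real.sqrt (1 - w^2)) / 2 := by
  rcases eq_or_lt_of_le h1 with rfl | h1
  · simp [Real.arccos_one]
  · have key : ∫ s in w..1, Real.sqrt (1 - s^2)
        = (fun s => (Real.arcsin s + s * Real.sqrt (1 - s^2)) / 2) 1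
          - (fun s => (Real.arcsin s + s * Real.sqrt (1 - s^2)) / 2) w := by
      refine intervalIntegral.integral_eq_sub_of_hasDeriv_right_of_le (f := fun s => (Real.arcsin s + s * Real.sqrt (1 - s^2)) / 2) h1.le ?_ ?_ ?_
      · apply ContinuousOn.div_const
        exact (Real.continuous_arcsin.continuousOn.add
          (continuousOn_id.mul ((continuous_const.sub (continuous_pow 2)).sqrt.continuousOn)))
      · intro s hs
        have hs1 : s < 1 := hs.2
        have hs0 : -1 < s := by linarith [hs.1]
        have hu : (0:ℝ) < 1 - s^2 := by nlinarith
        have d1 : HasDerivAt Real.arcsin (1 / Real.sqrt (1 - s^2)) s :=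
          Real.hasDerivAt_arcsin (by linarith) (by linarith)
        have d2 : HasDerivAt (fun t : ℝ => 1 - t^2) (-(2*s)) s := by
          simpa using ((hasDerivAt_pow 2 s).const_sub 1)
        have d3 : HasDerivAt (fun t : ℝ => Real.sqrt (1 - t^2)) (-(2*s) / (2 * Real.sqrt (1 - s^2))) s :=
          (Real.hasDerivAt_sqrt hu.ne').comp s d2 |>.congr_deriv (by ring)
        have d4 : HasDerivAt (fun t : ℝ => t * Real.sqrt (1 - t^2))
            (1 * Real.sqrt (1 - s^2) + s * (-(2*s) / (2 * Real.sqrt (1 - s^2)))) s :=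
          (hasDerivAt_id s).mul d3
        have hsq : Real.sqrt (1 - s^2) > 0 := Real.sqrt_pos.2 hu
        have : HasDerivAt (fun t : ℝ => (Real.arcsin t + t * Real.sqrt (1 - t^2)) / 2)
            ((1 / Real.sqrt (1 - s^2) + (1 * Real.sqrt (1 - s^2) + s * (-(2*s) / (2 * Real.sqrt (1 - s^2))))) / 2) s :=
          (d1.add d4).div_const 2
        have heq : (1 / Real.sqrt (1 - s^2) + (1 * Real.sqrt (1 - s^2) + s * (-(2*s) / (2 * Real.sqrt (1 - s^2))))) / 2
            = Real.sqrt (1 - s^2) := by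
          have h2 : Real.sqrt (1 - s^2) ^ 2 = 1 - s^2 := Real.sq_sqrt hu.le
          field_simp
          nlinarith [h2]
        exact (heq ▸ this).hasDerivWithinAt
      · apply ContinuousOn.intervalIntegrable
        exact ((continuous_const.sub (continuous_pow 2)).sqrt).continuousOn
    rw [key]
    simp only []
    rw [Real.arcsin_one, Real.arccos]
    rw [show (1:ℝ) - 1^2 = 0 by ring, Real.sqrt_zero]
    ring

lemma slice_volume (c : ℝ) : volume {b : ℝ | b^2 ≤ c} = ENNReal.ofReal (2 * Real.sqrt c) := by
  rcases lt_or_ge c 0 with hc | hc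
  · have : {b : ℝ | b^2 ≤ c} = ∅ := by
      ext b; simp only [Set.mem_setOf_eq, Set.mem_empty_iff_false, iff_false]
      nlinarith [sq_nonneg b]
    rw [this, measure_empty]
    rw [show Real.sqrt c = 0 from Real.sqrt_eq_zero_of_nonpos hc.le]
    simp
  · have : {b : ℝ | b^2 ≤ c} = Set.Icc (-Real.sqrt c) (Real.sqrt c) := by
      ext b
      simp only [Set.mem_setOf_eq, Set.mem_Icc, ← abs_le]
      constructor
      · intro h
        calc |b| = Real.sqrt (b^2) := (Real.sqrt_sq_eq_abs b).symm
        _ ≤ Real.sqrt c := Real.sqrt_le_sqrt h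
      · intro h
        calc b^2 = |b|^2 := (sq_abs b).symm
        _ ≤ Real.sqrt c ^ 2 := by
            have := abs_nonneg b
            nlinarith [Real.sqrt_nonneg c]
        _ = c := Real.sq_sqrt hc
    rw [this, Real.volume_Icc]
    congr 1; ring

lemma lens_R2 (w : ℝ) (h0 : 0 ≤ w) (h1 : w ≤ 1) :
    volume {p : ℝ × ℝ | p.1^2 + p.2^2 ≤ 1/4 ∧ (p.1 - w)^2 + p.2^2 ≤ 1/4}
      = ENNReal.ofReal ((Real.arccos w - w * Real.sqrt (1 - w^2)) / 2) := by
  set g : ℝ → ℝ := fun a => 2 * Real.sqrt (min (1/4 - a^2) (1/4 - (a-w)^2)) with hg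
  have hgnn : ∀ a, 0 ≤ g a := fun a => mul_nonneg two_pos.le (Real.sqrt_nonneg _)
  have hgzero : ∀ a, a ≤ w - 1/2 ∨ 1/2 ≤ a → g a = 0 := by
    intro a ha
    have hm : min (1/4 - a^2) (1/4 - (a-w)^2) ≤ 0 := by
      rcases ha with ha | ha
      · exact le_trans (min_le_right _ _) (by nlinarith)
      · exact le_trans (min_le_left _ _) (by nlinarith)
    show 2 * Real.sqrt _ = 0
    rw [Real.sqrt_eq_zero_of_nonpos hm, mul_zero]
  have hgcont : Continuous g := by
    apply continuous_const.mul
    apply Continuous.sqrt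
    exact Continuous.min (by continuity) (by continuity)
  have hgint : Integrable g := by
    apply hgcont.integrable_of_hasCompactSupport
    apply HasCompactSupport.intro (isCompact_Icc (a := w - 1/2) (b := 1/2))
    intro a ha
    simp only [Set.mem_Icc, not_and_or, not_le] at ha
    exact hgzero a (ha.imp le_of_lt le_of_lt)
  have hS : MeasurableSet {p : ℝ × ℝ | p.1^2 + p.2^2 ≤ 1/4 ∧ (p.1 - w)^2 + p.2^2 ≤ 1/4} := by
    have h1 : IsClosed {p : ℝ × ℝ | p.1^2 + p.2^2 ≤ 1/4} := isClosed_le (by fun_prop) continuous_const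
    have h2 : IsClosed {p : ℝ × ℝ | (p.1 - w)^2 + p.2^2 ≤ 1/4} := isClosed_le (by fun_prop) continuous_const
    exact (h1.inter h2).measurableSet
  rw [MeasureTheory.Measure.volume_eq_prod, MeasureTheory.Measure.prod_apply hS]
  have hslice : ∀ a : ℝ,
      volume (Prod.mk a ⁻¹' {p : ℝ × ℝ | p.1^2 + p.2^2 ≤ 1/4 ∧ (p.1 - w)^2 + p.2^2 ≤ 1/4})
        = ENNReal.ofReal (g a) := by
    intro a
    have : Prod.mk a ⁻¹' {p : ℝ × ℝ | p.1^2 + p.2^2 ≤ 1/4 ∧ (p.1 - w)^2 + p.2^2 ≤ 1/4}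
        = {b : ℝ | b^2 ≤ min (1/4 - a^2) (1/4 - (a-w)^2)} := by
      ext b
      simp only [Set.mem_preimage, Set.mem_setOf_eq, le_min_iff]
      constructor
      · rintro ⟨hb1, hb2⟩; constructor <;> linarith
      · rintro ⟨hb1, hb2⟩; constructor <;> linarith
    rw [this, slice_volume]
  rw [lintegral_congr hslice]
  rw [← MeasureTheory.ofReal_integral_eq_lintegral_ofReal hgint (Filter.Eventually.of_forall hgnn)]
  congr 1
  -- now compute ∫ g
  have hsupp : ∫ a : ℝ, g a = ∫ a in Set.Ioc (w - 1/2) (1/2), g a := by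
    refine (setIntegral_eq_integral_of_forall_compl_eq_zero ?_).symm
    intro a ha
    simp only [Set.mem_Ioc, not_and_or, not_lt, not_le] at ha
    rcases ha with ha | ha
    · exact hgzero a (Or.inl ha)
    · exact hgzero a (Or.inr ha.le)
  rw [hsupp, ← intervalIntegral.integral_of_le (by linarith : w - 1/2 ≤ 1/2)]
  have hii : ∀ a b : ℝ, IntervalIntegrable g volume a b := fun a b => hgcont.intervalIntegrable a b
  rw [← intervalIntegral.integral_add_adjacent_intervals (hii (w-1/2) (w/2)) (hii (w/2) (1/2))]
  have e1 : ∫ a in (w-1/2)..(w/2), g a = ∫ a in (w-1/2)..(w/2), 2 * Real.sqrt (1/4 - (a - w)^2) := by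
    apply intervalIntegral.integral_congr
    intro a ha
    rw [Set.uIcc_of_le (by linarith)] at ha
    have hm : min (1/4 - a^2) (1/4 - (a-w)^2) = 1/4 - (a-w)^2 :=
      min_eq_right (by nlinarith [ha.1, ha.2])
    show 2 * Real.sqrt _ = _
    rw [hm]
  have e2 : ∫ a in (w/2)..(1/2), g a = ∫ a in (w/2)..(1/2), 2 * Real.sqrt (1/4 - a^2) := by
    apply intervalIntegral.integral_congr
    intro a ha
    rw [Set.uIcc_of_le (by linarith)] at ha
    have hm : min (1/4 - a^2) (1/4 - (a-w)^2) = 1/4 - a^2 :=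
      min_eq_left (by nlinarith [ha.1, ha.2])
    show 2 * Real.sqrt _ = _
    rw [hm]
  have e3 : ∫ a in (w-1/2)..(w/2), 2 * Real.sqrt (1/4 - (a - w)^2)
      = ∫ a in (-(1/2) : ℝ)..(-(w/2)), 2 * Real.sqrt (1/4 - a^2) := by
    have := intervalIntegral.integral_comp_sub_right (a := w-1/2) (b := w/2)
      (fun t => 2 * Real.sqrt (1/4 - t^2)) w
    rw [this, show w - 1/2 - w = -(1/2) by ring, show w/2 - w = -(w/2) by ring]
  have e4 : ∫ a in (-(1/2) : ℝ)..(-(w/2)), 2 * Real.sqrt (1/4 - a^2)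
      = ∫ a in (w/2)..(1/2), 2 * Real.sqrt (1/4 - a^2) := by
    have := intervalIntegral.integral_comp_neg (a := w/2) (b := 1/2)
      (fun t => 2 * Real.sqrt (1/4 - t^2))
    rw [← this]
    apply intervalIntegral.integral_congr
    intro a _
    simp [neg_sq]
  have e5 : ∫ a in (w/2)..(1/2), 2 * Real.sqrt (1/4 - a^2)
      = (1/2) * ∫ s in w..1, Real.sqrt (1 - s^2) := by
    have h2 : ∀ t : ℝ, 2 * Real.sqrt (1/4 - t^2) = Real.sqrt (1 - (t*2)^2) := by
      intro t
      rw [show (1:ℝ) - (t*2)^2 = 4 * (1/4 - t^2) by ring,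
        Real.sqrt_mul (by norm_num : (0:ℝ) ≤ 4),
        show Real.sqrt 4 = 2 by
          rw [show (4:ℝ) = 2^2 by norm_num]; exact Real.sqrt_sq (by norm_num)]
    simp_rw [h2]
    have := intervalIntegral.integral_comp_mul_right (a := w/2) (b := 1/2)
      (fun s => Real.sqrt (1 - s^2)) (c := 2) two_ne_zero
    rw [this]
    norm_num [smul_eq_mul]
  rw [e1, e2, e3, e4, e5, my_integral_sqrt w h0 h1]
  ring

lemma lens_E (x y : E2) :
    (volume (closedBall x (1/2) ∩ closedBall y (1/2))).toReal
      = (π/4) * euclidHat ‖x - y‖ := by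
  set w : ℝ := ‖x - y‖ with hw
  have hw0 : 0 ≤ w := norm_nonneg _
  rcases le_or_gt w 1 with h1 | h1
  · -- the main case
    -- nonnegativity of the value
    have hval : 0 ≤ (Real.arccos w - w * Real.sqrt (1 - w^2)) / 2 := by
      rw [← my_integral_sqrt w hw0 h1]
      apply intervalIntegral.integral_nonneg h1
      intro s _; exact Real.sqrt_nonneg _
    -- the reflection
    set v : E2 := EuclideanSpace.single (0 : Fin 2) w with hv
    have hnv : ‖y - x‖ = ‖v‖ := by
      rw [hv, EuclideanSpace.norm_single, Real.norm_eq_abs, abs_of_nonneg hw0, norm_sub_rev]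
    set ψ := Submodule.reflection (ℝ ∙ ((y - x) - v))ᗮ with hψ
    have hψyx : ψ (y - x) = v := Submodule.reflection_sub hnv
    have hψv : ψ v = y - x := by
      conv_lhs => rw [← hψyx]
      exact Submodule.reflection_reflection _ _
    set φ : E2 → E2 := fun u => x + ψ u with hφ
    have hmp : MeasurePreserving φ volume volume :=
      (measurePreserving_add_left volume x).comp ψ.measurePreserving
    have k1 : ∀ u : E2, dist (φ u) x = dist u 0 := by
      intro u
      rw [hφ]
      simp only []
      rw [dist_eq_norm, dist_eq_norm, add_sub_cancel_left, ψ.norm_map, sub_zero]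
    have k2 : ∀ u : E2, dist (φ u) y = dist u v := by
      intro u
      rw [hφ]
      simp only []
      rw [dist_eq_norm, dist_eq_norm,
        show x + ψ u - y = ψ u - ψ v by rw [hψv]; abel, ← map_sub, ψ.norm_map]
    have hpre : φ ⁻¹' (closedBall x (1/2) ∩ closedBall y (1/2))
        = closedBall (0 : E2) (1/2) ∩ closedBall v (1/2) := by
      ext u
      simp only [Set.mem_preimage, Set.mem_inter_iff, mem_closedBall, k1, k2]
    have hmeas : MeasurableSet (closedBall x (1/2) ∩ closedBall y (1/2)) :=
      (measurableSet_closedBall).inter measurableSet_closedBall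
    have step1 : volume (closedBall x (1/2) ∩ closedBall y (1/2))
        = volume (closedBall (0 : E2) (1/2) ∩ closedBall v (1/2)) := by
      rw [← hmp.measure_preimage hmeas.nullMeasurableSet, hpre]
    -- now transfer to ℝ × ℝ
    set F : E2 → ℝ × ℝ := (⇑(MeasurableEquiv.piFinTwo (fun _ : Fin 2 => ℝ))) ∘
      ⇑(MeasurableEquiv.toLp 2 (Fin 2 → ℝ)).symm with hF
    have hmpF : MeasurePreserving F volume volume :=
      (volume_preserving_piFinTwo (fun _ => ℝ)).comp
        (EuclideanSpace.volume_preserving_symm_measurableEquiv_toLp (Fin 2))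
    have hSmeas : MeasurableSet {p : ℝ × ℝ | p.1^2 + p.2^2 ≤ 1/4 ∧ (p.1 - w)^2 + p.2^2 ≤ 1/4} := by
      have hc1 : IsClosed {p : ℝ × ℝ | p.1^2 + p.2^2 ≤ 1/4} := isClosed_le (by fun_prop) continuous_const
      have hc2 : IsClosed {p : ℝ × ℝ | (p.1 - w)^2 + p.2^2 ≤ 1/4} := isClosed_le (by fun_prop) continuous_const
      exact (hc1.inter hc2).measurableSet
    have hnorm_le : ∀ (u : E2) (r : ℝ), 0 ≤ r → (‖u‖ ≤ r ↔ (u 0)^2 + (u 1)^2 ≤ r^2) := by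
      intro u r hr
      rw [EuclideanSpace.norm_eq, Fin.sum_univ_two, Real.norm_eq_abs, Real.norm_eq_abs,
        sq_abs, sq_abs]
      constructor
      · intro h
        have := Real.sq_sqrt (by positivity : (0:ℝ) ≤ (u 0)^2 + (u 1)^2)
        nlinarith [Real.sqrt_nonneg ((u 0)^2 + (u 1)^2)]
      · intro h
        calc Real.sqrt ((u 0)^2 + (u 1)^2) ≤ Real.sqrt (r^2) := Real.sqrt_le_sqrt h
        _ = r := Real.sqrt_sq hr
    have hpre2 : closedBall (0 : E2) (1/2) ∩ closedBall v (1/2)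
        = F ⁻¹' {p : ℝ × ℝ | p.1^2 + p.2^2 ≤ 1/4 ∧ (p.1 - w)^2 + p.2^2 ≤ 1/4} := by
      ext u
      have hF0 : (F u).1 = u 0 := by
        rw [hF]
        simp [MeasurableEquiv.piFinTwo_apply, MeasurableEquiv.coe_toLp_symm]
      have hF1 : (F u).2 = u 1 := by
        rw [hF]
        simp [MeasurableEquiv.piFinTwo_apply, MeasurableEquiv.coe_toLp_symm]
      simp only [Set.mem_inter_iff, mem_closedBall, Set.mem_preimage, Set.mem_setOf_eq, hF0, hF1]
      rw [dist_eq_norm, sub_zero, dist_eq_norm]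
      rw [hnorm_le u (1/2) (by norm_num), hnorm_le (u - v) (1/2) (by norm_num)]
      have h0 : (u - v) 0 = u 0 - w := by
        simp [hv, EuclideanSpace.single_apply]
      have h1 : (u - v) 1 = u 1 := by
        simp [hv, EuclideanSpace.single_apply]
      rw [h0, h1]
      norm_num
    rw [step1, hpre2, hmpF.measure_preimage hSmeas.nullMeasurableSet, lens_R2 w hw0 h1,
      ENNReal.toReal_ofReal hval, euclidHat, if_pos h1]
    field_simp
    ring
  · -- balls are disjoint
    have hdisj : closedBall x (1/2) ∩ closedBall y (1/2) = ∅ := by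
      ext u
      simp only [Set.mem_inter_iff, mem_closedBall, Set.mem_empty_iff_false, iff_false, not_and,
        not_le]
      intro hu
      have : dist x y ≤ dist x u + dist u y := dist_triangle x u y
      have hxy : dist x y = w := by rw [dist_eq_norm]
      rw [dist_comm x u] at this
      linarith
    rw [hdisj, measure_empty, ENNReal.toReal_zero, euclidHat, if_neg (not_le.2 h1), mul_zero]

lemma euclidHat_zero : euclidHat 0 = 1 := by
  rw [euclidHat, if_pos (by norm_num : (0:ℝ) ≤ 1), Real.arccos_zero]
  have := Real.pi_ne_zero
  field_simp
  simp

lemma key_bound {n : ℕ} (x : Fin n → E2) (σ : Fin n → ℝ)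
    (hσ : ∀ j, σ j = 1 ∨ σ j = -1) (hs : (∑ j, σ j) ≠ 0) :
    1 ≤ ∑ i : Fin n, ∑ j : Fin n, σ i * σ j * euclidHat ‖x i - x j‖ := by
  classical
  set B : Fin n → Set E2 := fun j => closedBall (x j) (1/2) with hB
  set χ : Fin n → E2 → ℝ := fun j => (B j).indicator (fun _ => (1:ℝ)) with hχ
  have hBmeas : ∀ j, MeasurableSet (B j) := fun j => measurableSet_closedBall
  have hBfin : ∀ (S : Set E2) (j : Fin n), S ⊆ B j → volume S < ⊤ := fun S j hS =>
    lt_of_le_of_lt (measure_mono hS) measure_closedBall_lt_top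
  have hprod : ∀ i j, (fun u => χ i u * χ j u) = (B i ∩ B j).indicator (fun _ => (1:ℝ)) := by
    intro i j
    funext u
    rw [hχ]
    simp only []
    rw [← Set.inter_indicator_mul]
    simp
  have hprodint : ∀ i j, Integrable (fun u => χ i u * χ j u) := by
    intro i j
    rw [hprod i j]
    rw [integrable_indicator_iff ((hBmeas i).inter (hBmeas j))]
    exact integrableOn_const (hBfin _ i Set.inter_subset_left).ne
  have hIij : ∀ i j, ∫ u, χ i u * χ j u = (π/4) * euclidHat ‖x i - x j‖ := by
    intro i j
    rw [hprod i j]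
    refine (integral_indicator_one ((hBmeas i).inter (hBmeas j))).trans ?_
    rw [hB]
    exact lens_E (x i) (x j)
  have hχint : ∀ j, Integrable (χ j) := by
    intro j
    rw [hχ]
    simp only []
    rw [integrable_indicator_iff (hBmeas j)]
    exact integrableOn_const (hBfin _ j subset_rfl).ne
  have hIj : ∀ j, ∫ u, χ j u = π/4 := by
    intro j
    have := hIij j j
    rw [hprod j j, Set.inter_self] at this
    have h2 : ∫ u, χ j u = ∫ u, (B j).indicator (fun _ => (1:ℝ)) u := by rw [hχ]
    rw [h2, this, sub_self, norm_zero, euclidHat_zero, mul_one]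
  set f : E2 → ℝ := fun u => ∑ j, σ j * χ j u with hf
  have hfint : Integrable f := integrable_finset_sum _ (fun j _ => (hχint j).const_mul (σ j))
  have hf2 : ∀ u, f u ^ 2 = ∑ i, ∑ j, (σ i * σ j) * (χ i u * χ j u) := by
    intro u
    rw [hf]
    simp only []
    rw [sq, Finset.sum_mul_sum]
    apply Finset.sum_congr rfl
    intro i _
    apply Finset.sum_congr rfl
    intro j _
    ring
  have hf2int : Integrable (fun u => f u ^ 2) := by
    have : (fun u => f u ^ 2) = fun u => ∑ i, ∑ j, (σ i * σ j) * (χ i u * χ j u) := funext hf2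
    rw [this]
    exact integrable_finset_sum _ (fun i _ => integrable_finset_sum _
      (fun j _ => (hprodint i j).const_mul _))
  have hIf2 : ∫ u, f u ^ 2 = (π/4) * ∑ i, ∑ j, σ i * σ j * euclidHat ‖x i - x j‖ := by
    rw [funext hf2]
    rw [integral_finset_sum _ (fun i _ => integrable_finset_sum _
      (fun j _ => (hprodint i j).const_mul _))]
    rw [Finset.mul_sum]
    apply Finset.sum_congr rfl
    intro i _
    rw [integral_finset_sum _ (fun j _ => (hprodint i j).const_mul _), Finset.mul_sum]
    apply Finset.sum_congr rfl
    intro j _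
    rw [MeasureTheory.integral_const_mul, hIij i j]
    ring
  have hIf : ∫ u, f u = (∑ j, σ j) * (π/4) := by
    rw [hf]
    simp only []
    rw [integral_finset_sum _ (fun j _ => (hχint j).const_mul (σ j)), Finset.sum_mul]
    exact Finset.sum_congr rfl (fun j _ => by rw [MeasureTheory.integral_const_mul, hIj j])
  -- integer-valuedness
  set τ : Fin n → ℤ := fun j => if σ j = 1 then 1 else -1 with hτdef
  have hτ : ∀ j, ((τ j : ℤ) : ℝ) = σ j := by
    intro j
    rcases hσ j with h | h <;> rw [hτdef] <;> norm_num [h]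
  have hint : ∀ u, ∃ m : ℤ, f u = (m : ℝ) := by
    intro u
    refine ⟨∑ j, τ j * (if u ∈ B j then 1 else 0), ?_⟩
    rw [hf]
    push_cast
    apply Finset.sum_congr rfl
    intro j _
    rw [hτ j, hχ]
    simp [Set.indicator_apply]
  have habs : ∀ u, |f u| ≤ f u ^ 2 := by
    intro u
    obtain ⟨m, hm⟩ := hint u
    rw [hm]
    have : |m| ≤ m ^ 2 := by
      rcases eq_or_ne m 0 with rfl | hm0
      · simp
      · nlinarith [Int.one_le_abs hm0, sq_abs m]
    calc |(m:ℝ)| = ((|m| : ℤ) : ℝ) := by push_cast; ring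
    _ ≤ ((m^2 : ℤ) : ℝ) := by exact_mod_cast this
    _ = (m:ℝ)^2 := by push_cast; ring
  -- |∑ σ| ≥ 1
  have hsum_int : (∑ j, σ j) = ((∑ j, τ j : ℤ) : ℝ) := by
    push_cast
    exact Finset.sum_congr rfl (fun j _ => (hτ j).symm)
  have hsum_ge : 1 ≤ |∑ j, σ j| := by
    rw [hsum_int]
    have : (∑ j, τ j) ≠ 0 := by
      intro h
      rw [hsum_int, h] at hs
      exact hs (by norm_num)
    calc (1:ℝ) = ((1:ℤ):ℝ) := by norm_num
    _ ≤ ((|∑ j, τ j| : ℤ) : ℝ) := by exact_mod_cast Int.one_le_abs this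
    _ = |((∑ j, τ j : ℤ) : ℝ)| := by push_cast; ring
  -- put it together
  have step : π/4 ≤ ∫ u, f u ^ 2 := by
    calc π/4 = 1 * (π/4) := (one_mul _).symm
    _ ≤ |∑ j, σ j| * (π/4) := by
        apply mul_le_mul_of_nonneg_right hsum_ge
        positivity
    _ = |(∑ j, σ j) * (π/4)| := by
        rw [abs_mul, abs_of_pos (by positivity : (0:ℝ) < π/4)]
    _ = |∫ u, f u| := by rw [hIf]
    _ ≤ ∫ u, |f u| := by
        simpa using norm_integral_le_integral_norm f (μ := volume)
    _ ≤ ∫ u, f u ^ 2 := integral_mono hfint.abs hf2int habs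
  rw [hIf2] at step
  have hπ : (0:ℝ) < π/4 := by positivity
  nlinarith [step]

lemma double_sum_decomp {n : ℕ} (a : Fin n → Fin n → ℝ) (hsym : ∀ i j, a i j = a j i) :
    ∑ i : Fin n, ∑ j : Fin n, a i j
      = (∑ i, a i i) + 2 * ∑ i : Fin n, ∑ j ∈ Finset.univ.filter (fun j => i < j), a i j := by
  classical
  have h1 : ∀ i j : Fin n, a i j
      = (if i < j then a i j else 0) + ((if j < i then a i j else 0) + (if i = j then a i j else 0)) := by
    intro i j
    rcases lt_trichotomy i j with h | h | h
    · simp [h, asymm h, ne_of_lt h]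
    · subst h; simp [lt_irrefl]
    · simp [h, asymm h, (ne_of_lt h).symm]
  have hT : ∀ i, ∑ j ∈ Finset.univ.filter (fun j => i < j), a i j
      = ∑ j : Fin n, if i < j then a i j else 0 := fun i => Finset.sum_filter _ _
  calc ∑ i : Fin n, ∑ j : Fin n, a i j
      = ∑ i : Fin n, ∑ j : Fin n,
        ((if i < j then a i j else 0) + ((if j < i then a i j else 0) + (if i = j then a i j else 0))) := by
        exact Finset.sum_congr rfl (fun i _ => Finset.sum_congr rfl (fun j _ => h1 i j))
    _ = (∑ i : Fin n, ∑ j : Fin n, if i < j then a i j else 0)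
        + ((∑ i : Fin n, ∑ j : Fin n, if j < i then a i j else 0)
          + (∑ i : Fin n, ∑ j : Fin n, if i = j then a i j else 0)) := by
        rw [← Finset.sum_add_distrib, ← Finset.sum_add_distrib]
        exact Finset.sum_congr rfl (fun i _ => by rw [← Finset.sum_add_distrib, ← Finset.sum_add_distrib])
    _ = (∑ i : Fin n, ∑ j : Fin n, if i < j then a i j else 0)
        + ((∑ i : Fin n, ∑ j : Fin n, if i < j then a i j else 0) + ∑ i, a i i) := by
        congr 1
        congr 1
        · rw [Finset.sum_comm]
          exact Finset.sum_congr rfl (fun j _ => Finset.sum_congr rfl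
            (fun i _ => by rw [hsym]))
        · exact Finset.sum_congr rfl (fun i _ => by rw [Finset.sum_ite_eq]; simp)
    _ = (∑ i, a i i) + 2 * ∑ i : Fin n, ∑ j ∈ Finset.univ.filter (fun j => i < j), a i j := by
        simp only [hT]
        ring

lemma energy_lb {n : ℕ} (hn : 2 ≤ n) (x : Fin n → E2) (σ : Fin n → ℝ)
    (hσ : ∀ j, σ j = 1 ∨ σ j = -1) (hs : (∑ j, σ j) ≠ 0) :
    -(1/2) ≤ (1 / ((n : ℝ) - 1)) *
      ∑ i : Fin n, ∑ j ∈ Finset.univ.filter (fun j => i < j),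
        σ i * σ j * euclidHat ‖x i - x j‖ := by
  set a : Fin n → Fin n → ℝ := fun i j => σ i * σ j * euclidHat ‖x i - x j‖ with ha
  have hsym : ∀ i j, a i j = a j i := by
    intro i j
    rw [ha]
    simp only []
    rw [norm_sub_rev]
    ring
  have hdiag : ∀ i, a i i = 1 := by
    intro i
    rw [ha]
    simp only [sub_self, norm_zero, euclidHat_zero, mul_one]
    rcases hσ i with h | h <;> rw [h] <;> norm_num
  have hQ := key_bound x σ hσ hs
  have hdec := double_sum_decomp a hsym
  rw [Finset.sum_congr rfl (fun i (_ : i ∈ Finset.univ) => hdiag i), Finset.sum_const,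
    Finset.card_univ, Fintype.card_fin, nsmul_eq_mul, mul_one] at hdec
  set T := ∑ i : Fin n, ∑ j ∈ Finset.univ.filter (fun j => i < j), a i j with hTdef
  rw [hdec] at hQ
  have hc : (1:ℝ) ≤ (n : ℝ) - 1 := by
    have : (2:ℝ) ≤ (n:ℝ) := by exact_mod_cast hn
    linarith
  have hc0 : (0:ℝ) < (n:ℝ) - 1 := by linarith
  have h2 : -(1/2) * ((n:ℝ) - 1) ≤ T := by nlinarith
  calc -(1/2) = (1 / ((n:ℝ)-1)) * (-(1/2) * ((n:ℝ)-1)) := by field_simp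
  _ ≤ (1 / ((n:ℝ)-1)) * T :=
      mul_le_mul_of_nonneg_left h2 (by positivity)

theorem constrained_minimal_specific_energy_euclidHat :
    sInf { e : ℝ | ∃ (n : ℕ), 2 ≤ n ∧
        ∃ (x : Fin n → EuclideanSpace ℝ (Fin 2)) (σ : Fin n → ℝ),
          (∀ j, σ j = 1 ∨ σ j = -1) ∧
          (∑ j : Fin n, σ j) ≠ 0 ∧
          e = (1 / ((n : ℝ) - 1)) *
              ∑ i : Fin n, ∑ j ∈ Finset.univ.filter (fun j => i < j),
                σ i * σ j * euclidHat ‖x i - x j‖ } = -(1 / 2) := by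
  set S := { e : ℝ | ∃ (n : ℕ), 2 ≤ n ∧
        ∃ (x : Fin n → EuclideanSpace ℝ (Fin 2)) (σ : Fin n → ℝ),
          (∀ j, σ j = 1 ∨ σ j = -1) ∧
          (∑ j : Fin n, σ j) ≠ 0 ∧
          e = (1 / ((n : ℝ) - 1)) *
              ∑ i : Fin n, ∑ j ∈ Finset.univ.filter (fun j => i < j),
                σ i * σ j * euclidHat ‖x i - x j‖ } with hS
  have hlb : ∀ e ∈ S, -(1/2) ≤ e := by
    rintro e ⟨n, hn, x, σ, hσ, hs, rfl⟩
    exact energy_lb hn x σ hσ hs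
  have hmem : -(1/2) ∈ S := by
    refine ⟨3, by norm_num, ![0, 0, EuclideanSpace.single 0 2], ![1, -1, 1], ?_, ?_, ?_⟩
    · intro j
      fin_cases j <;> simp
    · rw [Fin.sum_univ_three]
      norm_num
      simp [Matrix.cons_val]
    · have h2 : euclidHat ‖(0 : E2) - EuclideanSpace.single (0 : Fin 2) (2:ℝ)‖ = 0 := by
        rw [zero_sub, norm_neg, EuclideanSpace.norm_single, Real.norm_eq_abs]
        rw [euclidHat, if_neg (by norm_num)]
      have h0 : euclidHat ‖(0 : E2) - 0‖ = 1 := by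
        rw [sub_zero, norm_zero, euclidHat_zero]
      rw [Fin.sum_univ_three]
      have e0 : (Finset.univ.filter (fun j => (0 : Fin 3) < j)) = {1, 2} := by decide
      have e1 : (Finset.univ.filter (fun j => (1 : Fin 3) < j)) = {2} := by decide
      have e2 : (Finset.univ.filter (fun j => (2 : Fin 3) < j)) = ∅ := by decide
      rw [e0, e1, e2]
      rw [Finset.sum_insert (by decide), Finset.sum_singleton, Finset.sum_singleton,
        Finset.sum_empty]
      simp only [Matrix.cons_val_zero, Matrix.cons_val_one, Matrix.head_cons,
        Matrix.cons_val_two, Matrix.tail_cons]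
      rw [h2, h0]
      norm_num
  refine le_antisymm (csInf_le ⟨-(1/2), hlb⟩ hmem) (le_csInf ⟨-(1/2), hmem⟩ hlb)
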